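/- Let α, γ, δ₁, β₁ ∈ ℂ with γ ≠ 0. Let x₀ ∈ ℂ ∖ {0}, let D′ be a punctured open disk centered at x₀, and let y, z : D′ → ℂ be holomorphic with y nowhere zero, satisfying the P_III system y′ = y²z/2 + δ₁ − y/x and z′ = −y z²/2 + 2γ y + (2/x)(α + β₁/y²) on D′. Suppose z extends holomorphically to x₀, y is meromorphic at x₀ with a pole at x₀, and write z(x₀) = 2w where w ∈ ℂ satisfies w² = γ. Then lim_{x → x₀} ( y(x) + 1/(w (x − x₀)) ) = −(α − w)/(2 x₀ γ), and z′(x₀) = −2α/x₀. -/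

import Mathlib

open Metric Filter Topology

/-- At a movable pole `x₀` of `y`, writing `z(x₀) = 2w` with `w² = γ`,
the next Laurent coefficient of `y` is `−(α − w)/(2x₀γ)`, and `z′(x₀) = −2α/x₀`. -/
theorem movable_pole_of_y_expansion (α γ δ₁ β₁ : ℂ) (hγ : γ ≠ 0)
    (x₀ : ℂ) (hx₀ : x₀ ≠ 0) (r : ℝ) (hr : 0 < r)
    (y z : ℂ → ℂ)
    (hy : DifferentiableOn ℂ y (ball x₀ r \ {x₀}))
    (hz : DifferentiableOn ℂ z (ball x₀ r \ {x₀}))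
    (hy0 : ∀ x ∈ ball x₀ r \ {x₀}, y x ≠ 0)
    (hsys1 : ∀ x ∈ ball x₀ r \ {x₀},
      deriv y x = (y x) ^ 2 * z x / 2 + δ₁ - y x / x)
    (hsys2 : ∀ x ∈ ball x₀ r \ {x₀},
      deriv z x = -(y x * (z x) ^ 2) / 2 + 2 * γ * y x
        + (2 / x) * (α + β₁ / (y x) ^ 2))
    (Z : ℂ → ℂ) (hZ : DifferentiableOn ℂ Z (ball x₀ r))
    (hZz : ∀ x ∈ ball x₀ r \ {x₀}, Z x = z x)
    (hy_mer : MeromorphicAt y x₀)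
    (hy_pole : meromorphicOrderAt y x₀ < ((0 : ℤ) : WithTop ℤ))
    (w : ℂ) (hw : w ^ 2 = γ) (hZx₀ : Z x₀ = 2 * w) :
    Tendsto (fun x => y x + 1 / (w * (x - x₀))) (𝓝[≠] x₀)
      (𝓝 (-(α - w) / (2 * x₀ * γ))) ∧
    deriv Z x₀ = -2 * α / x₀ := by
  have hw0 : w ≠ 0 := fun h => hγ (by rw [← hw, h]; ring)
  set u : ℂ → ℂ := fun x => (y x)⁻¹ with hu_def
  -- Step 1 : u → 0
  have htu : Tendsto u (𝓝[≠] x₀) (𝓝 0) := by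
    have hne : meromorphicOrderAt y x₀ ≠ ⊤ := fun h => by simp [h] at hy_pole
    obtain ⟨m, hm⟩ := WithTop.ne_top_iff_exists.mp hne
    obtain ⟨g, hg_an, hg_ne, hg_eq⟩ := (meromorphicOrderAt_eq_int_iff hy_mer).mp hm.symm
    have hm0 : m < 0 := by
      rw [← hm] at hy_pole
      exact_mod_cast hy_pole
    set n : ℕ := (-m).toNat with hn
    have hcont : ContinuousAt (fun x => (x - x₀) ^ n * (g x)⁻¹) x₀ :=
      ((continuousAt_id.sub continuousAt_const).pow n).mul
        (hg_an.continuousAt.inv₀ hg_ne)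
    have h0 : Tendsto (fun x => (x - x₀) ^ n * (g x)⁻¹) (𝓝[≠] x₀) (𝓝 0) := by
      have := hcont.tendsto.mono_left (nhdsWithin_le_nhds (s := {x₀}ᶜ))
      simpa [zero_pow (by omega : n ≠ 0)] using this
    refine h0.congr' ?_
    filter_upwards [hg_eq, self_mem_nhdsWithin] with x hx hx'
    have hs : x - x₀ ≠ 0 := sub_ne_zero.mpr hx'
    simp only [hu_def]
    rw [hx]
    have : (x - x₀) ^ (m : ℤ) = ((x - x₀) ^ n)⁻¹ := by
      rw [← zpow_natCast (x - x₀) n, ← zpow_neg]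
      congr 1
      omega
    simp [smul_eq_mul, mul_inv, this]
    ring
  -- Step 2 : choice of radius ρ
  have hsmall : ∀ᶠ x in 𝓝 x₀, x ∈ ({x₀}ᶜ : Set ℂ) → ‖u x‖ ≤ 1 := by
    have h0 : ∀ᶠ v : ℂ in 𝓝 (0:ℂ), ‖v‖ ≤ 1 := by
      filter_upwards [Metric.closedBall_mem_nhds (0:ℂ) one_pos] with v hv
      simpa using hv
    exact eventually_nhdsWithin_iff.mp (htu.eventually h0)
  obtain ⟨ε, hε, hεu⟩ := Metric.eventually_nhds_iff_ball.mp hsmall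
  set ρ : ℝ := min r (min ε ‖x₀‖) with hρ_def
  have hρ : 0 < ρ := by
    have := norm_pos_iff.mpr hx₀
    positivity
  have hρr : ρ ≤ r := min_le_left _ _
  have hρε : ρ ≤ ε := le_trans (min_le_right _ _) (min_le_left _ _)
  have hρx : ρ ≤ ‖x₀‖ := le_trans (min_le_right _ _) (min_le_right _ _)
  have hball : ball x₀ ρ ⊆ ball x₀ r := ball_subset_ball hρr
  have hb0 : ∀ x ∈ ball x₀ ρ, x ≠ 0 := by
    intro x hx hx0
    rw [mem_ball, hx0] at hx
    have : dist (0:ℂ) x₀ = ‖x₀‖ := by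
      simp [Complex.dist_eq]
    linarith [lt_of_lt_of_le hx hρx, this.symm.le]
  have hsubr : ball x₀ ρ \ {x₀} ⊆ ball x₀ r \ {x₀} :=
    fun x hx => ⟨hball hx.1, hx.2⟩
  have hopenr : IsOpen (ball x₀ r \ {x₀}) := isOpen_ball.sdiff isClosed_singleton
  have hopenρ : IsOpen (ball x₀ ρ \ {x₀}) := isOpen_ball.sdiff isClosed_singleton
  have hpunc : ball x₀ ρ \ {x₀} ∈ 𝓝[≠] x₀ :=
    diff_mem_nhdsWithin_compl (ball_mem_nhds _ hρ) {x₀}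
  -- Step 3 : removable singularity, U
  have hud : DifferentiableOn ℂ u (ball x₀ ρ \ {x₀}) := by
    intro x hx
    exact (((hy.differentiableAt (hopenr.mem_nhds (hsubr hx))).inv
      (hy0 x (hsubr hx)))).differentiableWithinAt
  have hbdd : BddAbove (norm ∘ u '' (ball x₀ ρ \ {x₀})) := by
    refine ⟨1, ?_⟩
    rintro - ⟨x, hx, rfl⟩
    exact hεu x (ball_subset_ball hρε hx.1) hx.2
  have hlim : limUnder (𝓝[≠] x₀) u = 0 := htu.limUnder_eq
  set U : ℂ → ℂ := Function.update u x₀ 0 with hU_def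
  have hU : DifferentiableOn ℂ U (ball x₀ ρ) := by
    have := Complex.differentiableOn_update_limUnder_of_bddAbove
      (ball_mem_nhds x₀ hρ) hud hbdd
    rwa [hlim] at this
  have hUx₀ : U x₀ = 0 := Function.update_self _ _ _
  have hUeq : ∀ x, x ≠ x₀ → U x = (y x)⁻¹ := fun x hx => Function.update_of_ne hx _ _
  have hUan : AnalyticOnNhd ℂ U (ball x₀ ρ) := hU.analyticOnNhd isOpen_ball
  have hx₀ρ : x₀ ∈ ball x₀ ρ := mem_ball_self hρ
  have hUdiffAt : DifferentiableAt ℂ U x₀ := (hUan x₀ hx₀ρ).differentiableAt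
  -- Step 4 : deriv U = V on the punctured ball
  set V : ℂ → ℂ := fun x => -(Z x) / 2 - δ₁ * (U x) ^ 2 + U x / x with hV_def
  have hderivU_p : ∀ x ∈ ball x₀ ρ \ {x₀}, deriv U x = V x := by
    intro x hx
    have hxr : x ∈ ball x₀ r \ {x₀} := hsubr hx
    have hyx : y x ≠ 0 := hy0 x hxr
    have hx0 : x ≠ 0 := hb0 x hx.1
    have hxx₀ : x ≠ x₀ := hx.2
    have hyd : DifferentiableAt ℂ y x := hy.differentiableAt (hopenr.mem_nhds hxr)
    have hinv : HasDerivAt (fun t => (y t)⁻¹) (-(deriv y x) / (y x) ^ 2) x :=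
      hyd.hasDerivAt.inv hyx
    have hUev : U =ᶠ[𝓝 x] fun t => (y t)⁻¹ := by
      filter_upwards [isOpen_compl_singleton.mem_nhds
        (by exact hxx₀ : x ∈ ({x₀}ᶜ : Set ℂ))] with t ht
      exact hUeq t ht
    rw [hUev.deriv_eq, hinv.deriv, hsys1 x hxr]
    have hUx : U x = (y x)⁻¹ := hUeq x hxx₀
    have hZx : Z x = z x := hZz x hxr
    simp only [hV_def]
    rw [hUx, hZx]
    field_simp
    ring
  -- Step 5 : deriv U = V everywhere on the ball
  have hVdiff : DifferentiableOn ℂ V (ball x₀ ρ) := by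
    refine DifferentiableOn.add (DifferentiableOn.sub ?_ ?_) ?_
    · exact ((hZ.mono hball).neg).div_const 2
    · exact (differentiableOn_const δ₁).mul (hU.pow 2)
    · exact hU.div differentiableOn_id hb0
  have hVcont : ContinuousAt V x₀ :=
    (hVdiff.continuousOn).continuousAt (ball_mem_nhds _ hρ)
  have hdUan : AnalyticOnNhd ℂ (deriv U) (ball x₀ ρ) := hUan.deriv
  have hderivUV : Set.EqOn (deriv U) V (ball x₀ ρ) := by
    intro x hx
    rcases eq_or_ne x x₀ with rfl | hxx₀
    · have t1 : Tendsto (deriv U) (𝓝[≠] x) (𝓝 (deriv U x)) :=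
        ((hdUan x hx).continuousAt).tendsto.mono_left nhdsWithin_le_nhds
      have t2 : Tendsto (deriv U) (𝓝[≠] x) (𝓝 (V x)) := by
        refine (hVcont.tendsto.mono_left nhdsWithin_le_nhds).congr' ?_
        filter_upwards [hpunc] with t ht
        exact (hderivU_p t ht).symm
      exact tendsto_nhds_unique t1 t2
    · exact hderivU_p x ⟨hx, hxx₀⟩
  have hU'x₀ : deriv U x₀ = -w := by
    rw [hderivUV hx₀ρ, hV_def]
    simp [hUx₀, hZx₀]
    ring
  -- Step 6 : part 2, deriv Z x₀
  have hZan : AnalyticOnNhd ℂ Z (ball x₀ r) := hZ.analyticOnNhd isOpen_ball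
  have hx₀r : x₀ ∈ ball x₀ r := mem_ball_self hr
  have hZdiffAt : DifferentiableAt ℂ Z x₀ := (hZan x₀ hx₀r).differentiableAt
  have hdZc : ContinuousAt (deriv Z) x₀ := ((hZan.deriv) x₀ hx₀r).continuousAt
  set DU : ℂ → ℂ := dslope U x₀ with hDU_def
  set DZ : ℂ → ℂ := dslope Z x₀ with hDZ_def
  have hDUc : ContinuousAt DU x₀ := continuousAt_dslope_same.mpr hUdiffAt
  have hDZc : ContinuousAt DZ x₀ := continuousAt_dslope_same.mpr hZdiffAt
  have hDUx₀ : DU x₀ = -w := by rw [hDU_def, dslope_same]; exact hU'x₀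
  have hDZx₀ : DZ x₀ = deriv Z x₀ := by rw [hDZ_def, dslope_same]
  have key : ∀ x ∈ ball x₀ ρ \ {x₀},
      deriv Z x = -(DZ x / DU x) * (Z x + 2 * w) / 2
        + (2 / x) * (α + β₁ * (U x) ^ 2) := by
    intro x hx
    have hxr : x ∈ ball x₀ r \ {x₀} := hsubr hx
    have hyx : y x ≠ 0 := hy0 x hxr
    have hx0 : x ≠ 0 := hb0 x hx.1
    have hxx₀ : x ≠ x₀ := hx.2
    have hs : x - x₀ ≠ 0 := sub_ne_zero.mpr hxx₀
    have hZev : Z =ᶠ[𝓝 x] z := by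
      filter_upwards [hopenr.mem_nhds hxr] with t ht
      exact hZz t ht
    rw [hZev.deriv_eq, hsys2 x hxr]
    have hDZx : DZ x = (Z x - 2 * w) / (x - x₀) := by
      rw [hDZ_def, dslope_of_ne _ hxx₀, slope_def_field, hZx₀]
    have hDUx : DU x = U x / (x - x₀) := by
      rw [hDU_def, dslope_of_ne _ hxx₀, slope_def_field, hUx₀, sub_zero]
    have hUx : U x = (y x)⁻¹ := hUeq x hxx₀
    have hZx : Z x = z x := hZz x hxr
    rw [hDZx, hDUx, hUx, hZx, ← hw]
    field_simp
    ring
  have hL : deriv Z x₀ = -2 * α / x₀ := by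
    have tlhs : Tendsto (deriv Z) (𝓝[≠] x₀) (𝓝 (deriv Z x₀)) :=
      hdZc.tendsto.mono_left nhdsWithin_le_nhds
    have hFc : ContinuousAt (fun x => -(DZ x / DU x) * (Z x + 2 * w) / 2
        + (2 / x) * (α + β₁ * (U x) ^ 2)) x₀ := by
      have hDUne : DU x₀ ≠ 0 := by rw [hDUx₀]; exact neg_ne_zero.mpr hw0
      exact (((hDZc.div hDUc hDUne).neg.mul
        ((hZdiffAt.continuousAt).add continuousAt_const)).div_const 2).add
        ((continuousAt_const.div continuousAt_id hx₀).mul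
          (continuousAt_const.add (continuousAt_const.mul
            ((hUdiffAt.continuousAt).pow 2))))
    have trhs := hFc.tendsto.mono_left (nhdsWithin_le_nhds (s := {x₀}ᶜ))
    have heq := tendsto_nhds_unique
      (tlhs.congr' (eventually_of_mem hpunc key)) trhs
    simp only [hDZx₀, hDUx₀, hZx₀, hUx₀] at heq
    field_simp at heq
    field_simp
    have h2 : deriv Z x₀ * x₀ * (w * 2) = -(2 * α) * (w * 2) := by
      linear_combination (-(w * 2)) * heq
    exact mul_right_cancel₀ (mul_ne_zero hw0 two_ne_zero) h2
  -- Step 7 : second coefficient, deriv DU x₀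
  have hDUdiff : DifferentiableOn ℂ DU (ball x₀ ρ) :=
    (Complex.differentiableOn_dslope (ball_mem_nhds _ hρ)).mpr hU
  have hDUan : AnalyticOnNhd ℂ DU (ball x₀ ρ) := hDUdiff.analyticOnNhd isOpen_ball
  have hdDUan : AnalyticOnNhd ℂ (deriv DU) (ball x₀ ρ) := hDUan.deriv
  have hUfun : ∀ t, U t = (t - x₀) * DU t := by
    intro t
    have := sub_smul_dslope U x₀ t
    rw [smul_eq_mul, hUx₀, sub_zero] at this
    exact this.symm
  have hVeq : Set.EqOn V (fun x => DU x + (x - x₀) * deriv DU x) (ball x₀ ρ) := by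
    intro x hx
    have hdU : HasDerivAt DU (deriv DU x) x := ((hDUan x hx).differentiableAt).hasDerivAt
    have hprod : HasDerivAt (fun t => (t - x₀) * DU t)
        (1 * DU x + (x - x₀) * deriv DU x) x :=
      ((hasDerivAt_id x).sub_const x₀).mul hdU
    have hfun : (fun t => (t - x₀) * DU t) = U := funext fun t => (hUfun t).symm
    rw [hfun] at hprod
    rw [← hderivUV hx, hprod.deriv]
    ring
  have hdV : deriv V x₀ = 2 * deriv DU x₀ := by
    have hev : V =ᶠ[𝓝 x₀] fun x => DU x + (x - x₀) * deriv DU x :=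
      eventuallyEq_of_mem (ball_mem_nhds _ hρ) hVeq
    rw [hev.deriv_eq]
    have h1 : HasDerivAt DU (deriv DU x₀) x₀ := ((hDUan x₀ hx₀ρ).differentiableAt).hasDerivAt
    have h2 : HasDerivAt (deriv DU) (deriv (deriv DU) x₀) x₀ :=
      ((hdDUan x₀ hx₀ρ).differentiableAt).hasDerivAt
    have h3 : HasDerivAt (fun x => DU x + (x - x₀) * deriv DU x)
        (deriv DU x₀ + (1 * deriv DU x₀ + (x₀ - x₀) * deriv (deriv DU) x₀)) x₀ :=
      h1.add (((hasDerivAt_id x₀).sub_const x₀).mul h2)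
    rw [h3.deriv]
    ring
  have hdVval : deriv V x₀ = α / x₀ - w / x₀ := by
    have hZ' : HasDerivAt Z (deriv Z x₀) x₀ := hZdiffAt.hasDerivAt
    have hU' : HasDerivAt U (-w) x₀ := by
      have := hUdiffAt.hasDerivAt
      rwa [hU'x₀] at this
    have hVd : HasDerivAt V
        (-(deriv Z x₀) / 2 - δ₁ * (2 * U x₀ ^ 1 * (-w))
          + ((-w) * x₀ - U x₀ * 1) / x₀ ^ 2) x₀ := by
      have hA : HasDerivAt (fun x => -(Z x) / 2) (-(deriv Z x₀) / 2) x₀ := hZ'.neg.div_const 2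
      have hB : HasDerivAt (fun x => δ₁ * (U x) ^ 2) (δ₁ * (2 * U x₀ ^ 1 * (-w))) x₀ :=
        (hU'.pow 2).const_mul δ₁
      have hC : HasDerivAt (fun x => U x / x) (((-w) * x₀ - U x₀ * 1) / x₀ ^ 2) x₀ :=
        hU'.div (hasDerivAt_id x₀) hx₀
      exact (hA.sub hB).add hC
    rw [hVd.deriv, hL, hUx₀]
    field_simp
    ring
  have hdDU : deriv DU x₀ = (α - w) / (2 * x₀) := by
    have : 2 * deriv DU x₀ = α / x₀ - w / x₀ := by rw [← hdV, hdVval]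
    field_simp at this ⊢
    linear_combination this
  -- Step 8 : final limit
  set k : ℂ → ℂ := dslope DU x₀ with hk_def
  have hkc : ContinuousAt k x₀ :=
    continuousAt_dslope_same.mpr (hDUan x₀ hx₀ρ).differentiableAt
  have hkx₀ : k x₀ = (α - w) / (2 * x₀) := by rw [hk_def, dslope_same]; exact hdDU
  have hDUne_ev : ∀ᶠ x in 𝓝 x₀, DU x ≠ 0 := by
    have : DU x₀ ≠ 0 := by rw [hDUx₀]; exact neg_ne_zero.mpr hw0
    exact hDUc.eventually_ne this
  have hGc : ContinuousAt (fun x => k x / (DU x * w)) x₀ := by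
    refine hkc.div (hDUc.mul continuousAt_const) ?_
    rw [hDUx₀]
    exact mul_ne_zero (neg_ne_zero.mpr hw0) hw0
  have hGval : k x₀ / (DU x₀ * w) = -(α - w) / (2 * x₀ * γ) := by
    rw [hkx₀, hDUx₀, ← hw]
    field_simp
  have hT : Tendsto (fun x => k x / (DU x * w)) (𝓝[≠] x₀)
      (𝓝 (-(α - w) / (2 * x₀ * γ))) := by
    have := hGc.tendsto.mono_left (nhdsWithin_le_nhds (s := {x₀}ᶜ))
    rwa [hGval] at this
  refine ⟨hT.congr' ?_, hL⟩
  filter_upwards [hpunc, eventually_nhdsWithin_of_eventually_nhds hDUne_ev]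
    with x hx hDUne
  have hxr : x ∈ ball x₀ r \ {x₀} := hsubr hx
  have hyx : y x ≠ 0 := hy0 x hxr
  have hxx₀ : x ≠ x₀ := hx.2
  have hs : x - x₀ ≠ 0 := sub_ne_zero.mpr hxx₀
  have hUx : U x = (y x)⁻¹ := hUeq x hxx₀
  have hyval : y x = ((x - x₀) * DU x)⁻¹ := by
    rw [← hUfun x, hUx, inv_inv]
  have hkx : (x - x₀) * k x = DU x + w := by
    have := sub_smul_dslope DU x₀ x
    rw [smul_eq_mul, hDUx₀] at this
    rw [this]
    ring
  rw [hyval]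
  have h1 : k x = (DU x + w) / (x - x₀) := by
    rw [← hkx]
    field_simp
  rw [h1]
  field_simp
  ring
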